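/- Let m ≥ 2 and E = EuclideanSpace ℝ (Fin m). Let S ⊆ E be a compact set whose (m−2)-dimensional Hausdorff measure vanishes: μH[m−2](S) = 0. Then for every ε > 0 there exists a C¹ function ζ : E → ℝ with compact support such that 0 ≤ ζ(x) ≤ 1 for all x, ζ = 1 on an open neighborhood of S, and ∫_E ‖Dζ(x)‖² dx < ε, where Dζ = fderiv ℝ ζ and the integral is with respect to Lebesgue measure. In other words, S has vanishing 2-capacity. -/

import Mathlib

open scoped MeasureTheory ENNReal
open MeasureTheory Metric Set

noncomputable section CapacityAux

set_option linter.unusedSectionVars false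
set_option linter.unusedVariables false

/-- a smooth approximation of `max`. -/
def hmax (c a b : ℝ) : ℝ := (1/2) * (a + b + Real.sqrt ((a - b) * (a - b) + c * c))

lemma abs_le_sqrt_aux (a c : ℝ) : |a| ≤ Real.sqrt (a * a + c * c) := by
  rw [← Real.sqrt_mul_self_eq_abs]
  exact Real.sqrt_le_sqrt (by nlinarith [mul_self_nonneg c])

lemma le_hmax_left (c a b : ℝ) : a ≤ hmax c a b := by
  have h1 := abs_le_sqrt_aux (a - b) c
  have h2 := le_abs_self (a - b)
  unfold hmax; linarith

lemma le_hmax_right (c a b : ℝ) : b ≤ hmax c a b := by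
  have h1 := abs_le_sqrt_aux (a - b) c
  have h2 := neg_abs_le (a - b)
  unfold hmax; linarith

lemma hmax_zero_le {c b : ℝ} (hb : 0 ≤ b) (hc : 0 ≤ c) : hmax c 0 b ≤ b + c / 2 := by
  have h1 : Real.sqrt ((0 - b) * (0 - b) + c * c) ≤ b + c := by
    calc Real.sqrt ((0 - b) * (0 - b) + c * c) ≤ Real.sqrt ((b + c) * (b + c)) :=
          Real.sqrt_le_sqrt (by nlinarith)
      _ = b + c := Real.sqrt_mul_self (by linarith)
  unfold hmax; linarith

lemma convex_sq_aux {lam mu a b : ℝ} (hl : 0 ≤ lam) (hm : 0 ≤ mu) (hlm : lam + mu = 1)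
    (ha : 0 ≤ a) (hb : 0 ≤ b) : (lam * a + mu * b) ^ 2 ≤ a ^ 2 + b ^ 2 := by
  have hmu' : mu = 1 - lam := by linarith
  subst hmu'
  have h1 : lam * a ^ 2 + (1 - lam) * b ^ 2 - (lam * a + (1 - lam) * b) ^ 2
      = lam * (1 - lam) * (a - b) ^ 2 := by ring
  have h3 : lam ≤ 1 := by linarith
  have h2 : 0 ≤ lam * (1 - lam) * (a - b) ^ 2 := by
    have : 0 ≤ 1 - lam := by linarith
    positivity
  nlinarith [sq_nonneg a, sq_nonneg b]

variable {E : Type*} [NormedAddCommGroup E] [NormedSpace ℝ E]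

lemma hmax_contDiff {c : ℝ} (hc : 0 < c) {u v : E → ℝ}
    (hu : ContDiff ℝ 1 u) (hv : ContDiff ℝ 1 v) :
    ContDiff ℝ 1 fun y => hmax c (u y) (v y) := by
  rw [contDiff_iff_contDiffAt]
  intro x
  have h1 : ContDiffAt ℝ 1 (fun y => (u y - v y) * (u y - v y) + c * c) x :=
    (((hu.sub hv).mul (hu.sub hv)).add contDiff_const).contDiffAt
  have hpos : (u x - v x) * (u x - v x) + c * c ≠ 0 := by
    nlinarith [mul_self_nonneg (u x - v x), mul_pos hc hc]
  have h2 := h1.sqrt hpos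
  exact contDiffAt_const.mul ((hu.contDiffAt.add hv.contDiffAt).add h2)

lemma hmax_hasFDerivAt {c : ℝ} (hc : 0 < c) {u v : E → ℝ} {U V : E →L[ℝ] ℝ} {x : E}
    (hu : HasFDerivAt u U x) (hv : HasFDerivAt v V x) :
    ∃ L : E →L[ℝ] ℝ, HasFDerivAt (fun y => hmax c (u y) (v y)) L x ∧
      ‖L‖ ^ 2 ≤ ‖U‖ ^ 2 + ‖V‖ ^ 2 := by
  set w : ℝ := u x - v x with hw
  have hqpos : 0 < w * w + c * c := by nlinarith [mul_self_nonneg w, mul_pos hc hc]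
  set q : ℝ := w * w + c * c with hq
  have hsq : 0 < Real.sqrt q := Real.sqrt_pos.2 hqpos
  set t : ℝ := w / Real.sqrt q with ht
  have habs : |t| ≤ 1 := by
    rw [ht, abs_div, abs_of_pos hsq, div_le_one hsq]
    calc |w| ≤ Real.sqrt (w * w + c * c) := abs_le_sqrt_aux w c
      _ = Real.sqrt q := by rw [hq]
  set lam : ℝ := (1 + t) / 2 with hlam
  set mu : ℝ := (1 - t) / 2 with hmu
  have hlam0 : 0 ≤ lam := by have := abs_le.1 habs; rw [hlam]; linarith [this.1]
  have hmu0 : 0 ≤ mu := by have := abs_le.1 habs; rw [hmu]; linarith [this.2]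
  have hlm : lam + mu = 1 := by rw [hlam, hmu]; ring
  refine ⟨lam • U + mu • V, ?_, ?_⟩
  · have hQ : HasFDerivAt (fun y => (u y - v y) * (u y - v y) + c * c)
        ((u x - v x) • (U - V) + (u x - v x) • (U - V)) x :=
      ((hu.sub hv).mul (hu.sub hv)).add_const _
    have hs : HasFDerivAt (fun y => Real.sqrt ((u y - v y) * (u y - v y) + c * c))
        ((1 / (2 * Real.sqrt q)) • ((u x - v x) • (U - V) + (u x - v x) • (U - V))) x :=
      hQ.sqrt (ne_of_gt hqpos)
    have hall := ((hu.add hv).add hs).const_mul (1/2 : ℝ)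
    have heq : (1/2 : ℝ) • (U + V + (1 / (2 * Real.sqrt q)) •
        ((u x - v x) • (U - V) + (u x - v x) • (U - V))) = lam • U + mu • V := by
      ext y
      simp only [ContinuousLinearMap.add_apply, ContinuousLinearMap.smul_apply,
        ContinuousLinearMap.sub_apply, smul_eq_mul, hlam, hmu, ht, ← hw]
      field_simp
      ring
    rw [heq] at hall
    exact hall
  · have hnorm : ‖lam • U + mu • V‖ ≤ lam * ‖U‖ + mu * ‖V‖ := by
      calc ‖lam • U + mu • V‖ ≤ ‖lam • U‖ + ‖mu • V‖ := norm_add_le _ _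
        _ = lam * ‖U‖ + mu * ‖V‖ := by
            have e1 := norm_smul (α := ℝ) (β := E →L[ℝ] ℝ) lam U
            have e2 := norm_smul (α := ℝ) (β := E →L[ℝ] ℝ) mu V
            simp only [Real.norm_eq_abs, abs_of_nonneg hlam0, abs_of_nonneg hmu0] at e1 e2
            rw [e1, e2]
    have h1 : ‖lam • U + mu • V‖ ^ 2 ≤ (lam * ‖U‖ + mu * ‖V‖) ^ 2 :=
      pow_le_pow_left₀ (norm_nonneg _) hnorm 2
    exact h1.trans (convex_sq_aux hlam0 hmu0 hlm (norm_nonneg U) (norm_nonneg V))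

/-- fold of `hmax` over a list of functions -/
def foldh (c : ℝ) : List (E → ℝ) → E → ℝ
  | [] => fun _ => 0
  | f :: l => fun x => hmax c (f x) (foldh c l x)

lemma foldh_nonneg (c : ℝ) (l : List (E → ℝ)) (x : E) : 0 ≤ foldh c l x := by
  induction l with
  | nil => exact le_refl _
  | cons f l ih => exact ih.trans (le_hmax_right _ _ _)

lemma le_foldh (c : ℝ) {l : List (E → ℝ)} {f : E → ℝ} (hf : f ∈ l) (x : E) :
    f x ≤ foldh c l x := by
  induction l with
  | nil => exact absurd hf List.not_mem_nil
  | cons g l ih =>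
    rcases List.mem_cons.1 hf with h | h
    · subst h; exact le_hmax_left _ _ _
    · exact (ih h).trans (le_hmax_right _ _ _)

lemma foldh_le {c : ℝ} (hc : 0 ≤ c) {l : List (E → ℝ)} {x : E}
    (h : ∀ f ∈ l, f x = 0) : foldh c l x ≤ l.length * (c / 2) := by
  induction l with
  | nil => simp [foldh]
  | cons f l ih =>
    have h0 : f x = 0 := h f (List.mem_cons_self)
    have hrest := ih fun g hg => h g (List.mem_cons_of_mem f hg)
    have : foldh c (f :: l) x = hmax c 0 (foldh c l x) := by
      show hmax c (f x) (foldh c l x) = _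
      rw [h0]
    rw [this]
    have := hmax_zero_le (foldh_nonneg c l x) hc
    simp only [List.length_cons]
    push_cast
    linarith

lemma foldh_contDiff {c : ℝ} (hc : 0 < c) {l : List (E → ℝ)}
    (h : ∀ f ∈ l, ContDiff ℝ 1 f) : ContDiff ℝ 1 (foldh c l) := by
  induction l with
  | nil => exact contDiff_const
  | cons f l ih =>
    exact hmax_contDiff hc (h f (List.mem_cons_self))
      (ih fun g hg => h g (List.mem_cons_of_mem f hg))

lemma foldh_deriv {c : ℝ} (hc : 0 < c) {l : List (E → ℝ)}
    (h : ∀ f ∈ l, ContDiff ℝ 1 f) (x : E) :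
    ∃ L : E →L[ℝ] ℝ, HasFDerivAt (foldh c l) L x ∧
      ‖L‖ ^ 2 ≤ (l.map fun f => ‖fderiv ℝ f x‖ ^ 2).sum := by
  induction l with
  | nil => exact ⟨0, hasFDerivAt_const 0 x, by simp⟩
  | cons f l ih =>
    obtain ⟨L, hL, hle⟩ := ih fun g hg => h g (List.mem_cons_of_mem f hg)
    have hf : HasFDerivAt f (fderiv ℝ f x) x :=
      (((h f (List.mem_cons_self)).differentiable one_ne_zero) x).hasFDerivAt
    obtain ⟨L', hL', hle'⟩ := hmax_hasFDerivAt hc hf hL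
    refine ⟨L', hL', ?_⟩
    simp only [List.map_cons, List.sum_cons]
    linarith

end CapacityAux

noncomputable section Bump

/-- base bump: 1 on ‖x‖ ≤ 2, 0 on ‖x‖ ≥ 4 -/
def eta0 {E : Type*} [NormedAddCommGroup E] [InnerProductSpace ℝ E] (x : E) : ℝ :=
  Real.smoothTransition ((16 - ‖x‖ ^ 2) / 12)

variable {E : Type*} [NormedAddCommGroup E] [InnerProductSpace ℝ E]

lemma eta0_contDiff : ContDiff ℝ 1 (eta0 (E := E)) :=
  Real.smoothTransition.contDiff.comp ((contDiff_const.sub (contDiff_norm_sq ℝ)).div_const 12)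

lemma eta0_nonneg (x : E) : 0 ≤ eta0 x := Real.smoothTransition.nonneg _

lemma eta0_le_one (x : E) : eta0 x ≤ 1 := Real.smoothTransition.le_one _

lemma eta0_eq_one {x : E} (h : ‖x‖ ≤ 2) : eta0 x = 1 := by
  apply Real.smoothTransition.one_of_one_le
  have h2 : ‖x‖ ^ 2 ≤ 4 := by nlinarith [norm_nonneg x]
  linarith

lemma eta0_eq_zero {x : E} (h : 4 ≤ ‖x‖) : eta0 x = 0 := by
  apply Real.smoothTransition.zero_of_nonpos
  have h2 : 16 ≤ ‖x‖ ^ 2 := by nlinarith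
  linarith

lemma eta0_fderiv_zero {x : E} (h : 4 < ‖x‖) : fderiv ℝ (eta0 (E := E)) x = 0 := by
  have hopen : IsOpen {y : E | 4 < ‖y‖} := isOpen_lt continuous_const continuous_norm
  have hev : eta0 (E := E) =ᶠ[nhds x] fun _ => 0 :=
    Filter.eventuallyEq_of_mem (hopen.mem_nhds h) fun y hy => eta0_eq_zero (le_of_lt hy)
  rw [hev.fderiv_eq]
  exact fderiv_const_apply 0

/-- bound on the derivative of `smoothTransition` -/
lemma exists_smoothTransition_deriv_bound :
    ∃ M : ℝ, 0 ≤ M ∧ ∀ t : ℝ, |deriv Real.smoothTransition t| ≤ M := by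
  have hc : Continuous (deriv Real.smoothTransition) :=
    (Real.smoothTransition.contDiff (n := 1)).continuous_deriv le_rfl
  obtain ⟨M0, hM0⟩ := (isCompact_Icc (a := (0:ℝ)) (b := 1)).exists_bound_of_continuousOn
    hc.continuousOn
  refine ⟨max M0 0, le_max_right _ _, fun t => ?_⟩
  by_cases ht : t ∈ Icc (0:ℝ) 1
  · exact le_trans (by simpa [Real.norm_eq_abs] using hM0 t ht) (le_max_left _ _)
  · have hz : deriv Real.smoothTransition t = 0 := by
      rcases lt_or_ge t 0 with h | h
      · have hev : Real.smoothTransition =ᶠ[nhds t] fun _ => 0 :=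
          Filter.eventuallyEq_of_mem ((isOpen_Iio (a := (0:ℝ))).mem_nhds h)
            fun y hy => Real.smoothTransition.zero_of_nonpos (le_of_lt hy)
        rw [hev.deriv_eq]; exact deriv_const t 0
      · have h1 : 1 < t := by
          rcases lt_or_ge 1 t with h' | h'
          · exact h'
          · exact absurd ⟨h, h'⟩ ht
        have hev : Real.smoothTransition =ᶠ[nhds t] fun _ => 1 :=
          Filter.eventuallyEq_of_mem ((isOpen_Ioi (a := (1:ℝ))).mem_nhds h1)
            fun y hy => Real.smoothTransition.one_of_one_le (le_of_lt hy)
        rw [hev.deriv_eq]; exact deriv_const t 1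
    simp [hz]

lemma add_pow_le_aux {a b : ℝ} (ha : 0 ≤ a) (hb : 0 ≤ b) (k : ℕ) :
    (a + b) ^ k ≤ 2 ^ k * (a ^ k + b ^ k) := by
  have h1 : (a + b) ^ k ≤ (2 * max a b) ^ k := by
    apply pow_le_pow_left₀ (by linarith)
    rcases le_total a b with h | h
    · rw [max_eq_right h]; linarith
    · rw [max_eq_left h]; linarith
  calc (a + b) ^ k ≤ (2 * max a b) ^ k := h1
    _ = 2 ^ k * (max a b) ^ k := mul_pow 2 _ k
    _ ≤ 2 ^ k * (a ^ k + b ^ k) := by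
        apply mul_le_mul_of_nonneg_left _ (by positivity)
        rcases le_total a b with h | h
        · rw [max_eq_right h]; nlinarith [pow_nonneg ha k]
        · rw [max_eq_left h]; nlinarith [pow_nonneg hb k]

/-- Covering by balls with small power sum, from vanishing Hausdorff measure. -/
lemma exists_ball_cover {X : Type*} [MetricSpace X] [Nonempty X] [MeasurableSpace X]
    [BorelSpace X] (S : Set X) {k : ℕ} (hk : 1 ≤ k)
    (hnull : μH[(k : ℝ)] S = 0) {δ : ℝ} (hδ : 0 < δ) :
    ∃ (y : ℕ → X) (s : ℕ → ℝ), (∀ n, 0 < s n) ∧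
      (S ⊆ ⋃ n, ball (y n) (2 * s n)) ∧
      ∀ F : Finset ℕ, (∑ n ∈ F, s n ^ k) ≤ δ := by
  set P : ℝ := (2:ℝ) ^ k with hP
  have hPpos : 0 < P := by positivity
  set δ' : ℝ := δ / (4 * P) with hδ'def
  have hδ' : 0 < δ' := by positivity
  -- extract a cover
  have h0 : (⨅ (t : ℕ → Set X) (_ : S ⊆ ⋃ n, t n) (_ : ∀ n, EMetric.diam (t n) ≤ 1),
      ∑' n, ⨆ _ : (t n).Nonempty, EMetric.diam (t n) ^ (k : ℝ)) = 0 := by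
    refine le_antisymm ?_ zero_le
    rw [← hnull, MeasureTheory.Measure.hausdorffMeasure_apply]
    exact le_iSup₂ (f := fun (r : ℝ≥0∞) (_ : 0 < r) =>
      ⨅ (t : ℕ → Set X) (_ : S ⊆ ⋃ n, t n) (_ : ∀ n, EMetric.diam (t n) ≤ r),
        ∑' n, ⨆ _ : (t n).Nonempty, EMetric.diam (t n) ^ (k : ℝ)) (1 : ℝ≥0∞) zero_lt_one
  have hlt : (⨅ (t : ℕ → Set X) (_ : S ⊆ ⋃ n, t n) (_ : ∀ n, EMetric.diam (t n) ≤ 1),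
      ∑' n, ⨆ _ : (t n).Nonempty, EMetric.diam (t n) ^ (k : ℝ)) < ENNReal.ofReal δ' := by
    rw [h0]; exact ENNReal.ofReal_pos.2 hδ'
  simp only [iInf_lt_iff] at hlt
  obtain ⟨t, hcov, hdiam, hsum⟩ := hlt
  classical
  set y : ℕ → X := fun n =>
    if h : (t n).Nonempty then h.choose else Classical.arbitrary X with hy
  set a : ℕ → ℝ := fun n => (EMetric.diam (t n)).toReal with ha
  have ha0 : ∀ n, 0 ≤ a n := fun n => ENNReal.toReal_nonneg
  set τ : ℝ := min 1 δ' with hτdef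
  have hτ : 0 < τ := lt_min one_pos hδ'
  set s : ℕ → ℝ := fun n => a n + τ * (1/2) ^ n with hs
  have hspos : ∀ n, 0 < s n := fun n => by
    have : (0:ℝ) < τ * (1/2) ^ n := by positivity
    have := ha0 n; simp only [hs]; linarith
  refine ⟨y, s, hspos, ?_, ?_⟩
  · -- covering
    intro x hx
    obtain ⟨n, hn⟩ := Set.mem_iUnion.1 (hcov hx)
    have hne : (t n).Nonempty := ⟨x, hn⟩
    have hyn : y n ∈ t n := by
      simp only [hy, dif_pos hne]; exact hne.choose_spec
    have hdist : dist x (y n) ≤ a n := by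
      have h1 : edist x (y n) ≤ EMetric.diam (t n) := EMetric.edist_le_diam_of_mem hn hyn
      have h2 : EMetric.diam (t n) ≠ ⊤ := (lt_of_le_of_lt (hdiam n) ENNReal.one_lt_top).ne
      rw [dist_edist]
      exact ENNReal.toReal_mono h2 h1
    refine Set.mem_iUnion.2 ⟨n, mem_ball.2 ?_⟩
    have h3 : (0:ℝ) < τ * (1/2) ^ n := by positivity
    have h4 := hspos n
    calc dist x (y n) ≤ a n := hdist
      _ < s n := by simp only [hs]; linarith
      _ ≤ 2 * s n := by linarith
  · -- sum bound
    intro F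
    -- bound on the `a` part
    have hfin : ∀ n : ℕ, (⨆ _ : (t n).Nonempty, EMetric.diam (t n) ^ (k : ℝ)) ≠ ⊤ :=
      fun n => (lt_of_le_of_lt (ENNReal.le_tsum n) (lt_of_lt_of_le hsum le_top)).ne
    have hsumfin : (∑' n, ⨆ _ : (t n).Nonempty, EMetric.diam (t n) ^ (k : ℝ)) ≠ ⊤ :=
      (lt_of_lt_of_le hsum le_top).ne
    have key : ∀ n, a n ^ k ≤ (⨆ _ : (t n).Nonempty, EMetric.diam (t n) ^ (k : ℝ)).toReal := by
      intro n
      by_cases hne : (t n).Nonempty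
      · rw [iSup_pos hne]
        rw [← ENNReal.toReal_rpow]
        rw [ha]
        rw [Real.rpow_natCast]
      · have hte : t n = ∅ := Set.not_nonempty_iff_eq_empty.1 hne
        have : a n = 0 := by simp only [ha, hte]; show (Metric.ediam (∅ : Set X)).toReal = 0; simp
        rw [this, zero_pow (by omega), iSup_neg hne]
        simp
    have hapart : (∑ n ∈ F, a n ^ k) ≤ δ' := by
      calc (∑ n ∈ F, a n ^ k)
          ≤ ∑ n ∈ F, (⨆ _ : (t n).Nonempty, EMetric.diam (t n) ^ (k : ℝ)).toReal :=
            Finset.sum_le_sum fun n _ => key n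
        _ = (∑ n ∈ F, ⨆ _ : (t n).Nonempty, EMetric.diam (t n) ^ (k : ℝ)).toReal :=
            (ENNReal.toReal_sum fun n _ => hfin n).symm
        _ ≤ (∑' n, ⨆ _ : (t n).Nonempty, EMetric.diam (t n) ^ (k : ℝ)).toReal :=
            ENNReal.toReal_mono hsumfin (ENNReal.sum_le_tsum F)
        _ ≤ (ENNReal.ofReal δ').toReal := ENNReal.toReal_mono ENNReal.ofReal_ne_top hsum.le
        _ = δ' := ENNReal.toReal_ofReal hδ'.le
    -- geometric part
    have hτ1 : τ ≤ 1 := min_le_left _ _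
    have hτδ : τ ≤ δ' := min_le_right _ _
    have hτk : τ ^ k ≤ δ' := le_trans (pow_le_of_le_one hτ.le hτ1 (by omega)) hτδ
    have hgeo : (∑ n ∈ F, (τ * (1/2) ^ n) ^ k) ≤ 2 * τ ^ k := by
      have h2 : ∀ n : ℕ, (τ * (1/2) ^ n) ^ k ≤ τ ^ k * (1/2:ℝ) ^ n := by
        intro n
        rw [mul_pow]
        apply mul_le_mul_of_nonneg_left _ (by positivity)
        calc ((1/2:ℝ) ^ n) ^ k ≤ ((1/2:ℝ) ^ n) ^ 1 :=
              pow_le_pow_of_le_one (by positivity) (pow_le_one₀ (by norm_num) (by norm_num)) hk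
          _ = (1/2:ℝ) ^ n := pow_one _
      calc (∑ n ∈ F, (τ * (1/2) ^ n) ^ k) ≤ ∑ n ∈ F, τ ^ k * (1/2:ℝ) ^ n :=
            Finset.sum_le_sum fun n _ => h2 n
        _ = τ ^ k * ∑ n ∈ F, (1/2:ℝ) ^ n := by rw [Finset.mul_sum]
        _ ≤ τ ^ k * 2 := by
            apply mul_le_mul_of_nonneg_left _ (by positivity)
            calc (∑ n ∈ F, (1/2:ℝ) ^ n) ≤ ∑' n, (1/2:ℝ) ^ n :=
                  summable_geometric_two.sum_le_tsum F (fun i _ => by positivity)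
              _ = 2 := tsum_geometric_two
        _ = 2 * τ ^ k := by ring
    -- assemble
    have hptwise : ∀ n, s n ^ k ≤ P * (a n ^ k + (τ * (1/2) ^ n) ^ k) := by
      intro n
      have := add_pow_le_aux (ha0 n) (by positivity : (0:ℝ) ≤ τ * (1/2) ^ n) k
      simpa [hs, hP] using this
    have hPδ : P * δ' = δ / 4 := by
      rw [hδ'def]; field_simp
    calc (∑ n ∈ F, s n ^ k) ≤ ∑ n ∈ F, P * (a n ^ k + (τ * (1/2) ^ n) ^ k) :=
          Finset.sum_le_sum fun n _ => hptwise n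
      _ = P * ((∑ n ∈ F, a n ^ k) + ∑ n ∈ F, (τ * (1/2) ^ n) ^ k) := by
          rw [← Finset.mul_sum, Finset.sum_add_distrib]
      _ ≤ P * (δ' + 2 * δ') := by
          apply mul_le_mul_of_nonneg_left _ hPpos.le
          have : 2 * τ ^ k ≤ 2 * δ' := by linarith
          linarith
      _ = 3 * (P * δ') := by ring
      _ = 3 * (δ / 4) := by rw [hPδ]
      _ ≤ δ := by linarith

variable {m : ℕ}


local notation "Em" => EuclideanSpace ℝ (Fin m)

lemma scaled_norm (y : Em) {s : ℝ} (hs : 0 < s) (x : Em) :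
    ‖s⁻¹ • (x - y)‖ = s⁻¹ * dist x y := by
  rw [norm_smul, Real.norm_eq_abs, abs_of_pos (inv_pos.2 hs), dist_eq_norm]

lemma scaled_eq_one (y : Em) {s : ℝ} (hs : 0 < s) {x : Em} (h : dist x y ≤ 2 * s) :
    eta0 (s⁻¹ • (x - y)) = 1 := by
  apply eta0_eq_one
  rw [scaled_norm y hs x]
  rw [inv_mul_le_iff₀ hs]
  linarith

lemma scaled_eq_zero (y : Em) {s : ℝ} (hs : 0 < s) {x : Em} (h : 4 * s ≤ dist x y) :
    eta0 (s⁻¹ • (x - y)) = 0 := by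
  apply eta0_eq_zero
  rw [scaled_norm y hs x, le_inv_mul_iff₀ hs]
  linarith

lemma scaled_contDiff (y : Em) {s : ℝ} (hs : 0 < s) :
    ContDiff ℝ 1 fun x : Em => eta0 (s⁻¹ • (x - y)) :=
  eta0_contDiff.comp ((contDiff_id.sub contDiff_const).const_smul s⁻¹)

lemma scaled_hcs (y : Em) {s : ℝ} (hs : 0 < s) :
    HasCompactSupport fun x : Em => eta0 (s⁻¹ • (x - y)) := by
  apply HasCompactSupport.intro (isCompact_closedBall y (4 * s))
  intro x hx
  have : 4 * s ≤ dist x y := le_of_lt (by simpa [mem_closedBall] using hx)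
  exact scaled_eq_zero y hs this

lemma scaled_fderiv (y : Em) {s : ℝ} (hs : 0 < s) (x : Em) :
    fderiv ℝ (fun x : Em => eta0 (s⁻¹ • (x - y))) x
      = s⁻¹ • fderiv ℝ (eta0 (E := Em)) (s⁻¹ • (x - y)) := by
  have h1 : HasFDerivAt (fun x : Em => s⁻¹ • (x - y))
      (s⁻¹ • ContinuousLinearMap.id ℝ Em) x :=
    ((hasFDerivAt_id x).sub_const y).const_smul s⁻¹
  have h2 : HasFDerivAt (eta0 (E := Em))
      (fderiv ℝ (eta0 (E := Em)) (s⁻¹ • (x - y))) (s⁻¹ • (x - y)) :=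
    ((eta0_contDiff.differentiable one_ne_zero) _).hasFDerivAt
  have h3 := h2.comp x h1
  have h4 : HasFDerivAt (fun x : Em => eta0 (s⁻¹ • (x - y)))
      ((fderiv ℝ (eta0 (E := Em)) (s⁻¹ • (x - y))).comp
        (s⁻¹ • ContinuousLinearMap.id ℝ Em)) x := h3
  rw [h4.fderiv]
  ext v
  simp

lemma integrable_fderiv_sq {f : Em → ℝ} (hf : ContDiff ℝ 1 f) (hc : HasCompactSupport f) :
    Integrable (fun x : Em => ‖fderiv ℝ f x‖ ^ 2) := by
  have hcont : Continuous fun x : Em => ‖fderiv ℝ f x‖ ^ 2 :=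
    ((hf.continuous_fderiv one_ne_zero).norm).pow 2
  apply hcont.integrable_of_hasCompactSupport
  have : (fun x : Em => ‖fderiv ℝ f x‖ ^ 2) = (fun L : Em →L[ℝ] ℝ => ‖L‖ ^ 2) ∘ fderiv ℝ f :=
    rfl
  rw [this]
  exact (hc.fderiv ℝ).comp_left (by simp)

lemma scaled_integral (hm : 2 ≤ m) (y : Em) {s : ℝ} (hs : 0 < s) :
    (∫ x : Em, ‖fderiv ℝ (fun x : Em => eta0 (s⁻¹ • (x - y))) x‖ ^ 2)
      = s ^ (m - 2) * ∫ x : Em, ‖fderiv ℝ (eta0 (E := Em)) x‖ ^ 2 := by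
  have hinv : (0:ℝ) < s⁻¹ := inv_pos.2 hs
  calc (∫ x : Em, ‖fderiv ℝ (fun x : Em => eta0 (s⁻¹ • (x - y))) x‖ ^ 2)
      = ∫ x : Em, (s⁻¹) ^ 2 * ‖fderiv ℝ (eta0 (E := Em)) (s⁻¹ • (x - y))‖ ^ 2 := by
        congr 1; funext x
        rw [scaled_fderiv y hs x]
        have := norm_smul (α := ℝ) (β := Em →L[ℝ] ℝ) s⁻¹ (fderiv ℝ (eta0 (E := Em)) (s⁻¹ • (x - y)))
        rw [this, Real.norm_eq_abs, abs_of_pos hinv, mul_pow]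
    _ = (s⁻¹) ^ 2 * ∫ x : Em, ‖fderiv ℝ (eta0 (E := Em)) (s⁻¹ • (x - y))‖ ^ 2 :=
        integral_const_mul _ _
    _ = (s⁻¹) ^ 2 * ∫ x : Em, ‖fderiv ℝ (eta0 (E := Em)) (s⁻¹ • x)‖ ^ 2 := by
        rw [integral_sub_right_eq_self (fun z : Em => ‖fderiv ℝ (eta0 (E := Em)) (s⁻¹ • z)‖ ^ 2) y]
    _ = (s⁻¹) ^ 2 * (|s ^ Module.finrank ℝ Em| • ∫ x : Em, ‖fderiv ℝ (eta0 (E := Em)) x‖ ^ 2) := by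
        rw [MeasureTheory.Measure.integral_comp_inv_smul volume
          (fun x : Em => ‖fderiv ℝ (eta0 (E := Em)) x‖ ^ 2) s]
    _ = s ^ (m - 2) * ∫ x : Em, ‖fderiv ℝ (eta0 (E := Em)) x‖ ^ 2 := by
        rw [smul_eq_mul, finrank_euclideanSpace_fin (n := m), abs_of_pos (pow_pos hs m), ← mul_assoc]
        congr 1
        rw [inv_pow, inv_mul_eq_iff_eq_mul₀ (by positivity), ← pow_add]
        congr 1
        omega

end Bump

open scoped MeasureTheory

/-- A compact subset of `ℝ^m` with vanishing `(m-2)`-dimensional Hausdorff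
measure has vanishing 2-capacity: for every `ε > 0` there is a compactly
supported `C¹` function `ζ` with `0 ≤ ζ ≤ 1`, `ζ = 1` near `S` and
`∫ ‖Dζ‖² < ε`. -/
theorem null_two_capacity_of_hausdorff_null
    (m : ℕ) (hm : 2 ≤ m)
    (S : Set (EuclideanSpace ℝ (Fin m))) (hS : IsCompact S)
    (hnull : μH[(m : ℝ) - 2] S = 0) :
    ∀ ε : ℝ, 0 < ε →
      ∃ ζ : EuclideanSpace ℝ (Fin m) → ℝ,
        ContDiff ℝ 1 ζ ∧ HasCompactSupport ζ ∧
        (∀ x, 0 ≤ ζ x ∧ ζ x ≤ 1) ∧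
        (∃ V : Set (EuclideanSpace ℝ (Fin m)), IsOpen V ∧ S ⊆ V ∧ ∀ x ∈ V, ζ x = 1) ∧
        ∫ x, ‖fderiv ℝ ζ x‖ ^ 2 < ε := by
  intro ε hε
  classical
  rcases Set.eq_empty_or_nonempty S with hSe | hSne
  · -- trivial case: S is empty
    refine ⟨fun _ => 0, contDiff_const, HasCompactSupport.intro isCompact_empty (fun x _ => rfl),
      fun x => by norm_num, ⟨∅, isOpen_empty, by simp [hSe], by simp⟩, ?_⟩
    have hz : (fun x : EuclideanSpace ℝ (Fin m) =>
        ‖fderiv ℝ (fun _ : EuclideanSpace ℝ (Fin m) => (0:ℝ)) x‖ ^ 2) = fun _ => 0 := by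
      funext x
      rw [fderiv_const_apply]
      simp
    rw [hz, integral_zero]
    exact hε
  -- S nonempty forces m ≥ 3
  have hm3 : 3 ≤ m := by
    by_contra hcon
    have hm2 : m = 2 := by omega
    subst hm2
    obtain ⟨x, hx⟩ := hSne
    have h1 : μH[((2:ℕ):ℝ) - 2] {x} ≤ μH[((2:ℕ):ℝ) - 2] S :=
      measure_mono (Set.singleton_subset_iff.2 hx)
    rw [hnull] at h1
    have h2 : ((2:ℕ):ℝ) - 2 = (0:ℝ) := by norm_num
    rw [h2] at h1
    rw [MeasureTheory.Measure.hausdorffMeasure_zero_singleton] at h1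
    simp at h1
  set k : ℕ := m - 2 with hkdef
  have hk1 : 1 ≤ k := by omega
  have hkr : ((m:ℝ) - 2) = (k : ℝ) := by
    have : (k:ℝ) = (m:ℝ) - 2 := by
      rw [hkdef, Nat.cast_sub hm]; norm_num
    linarith
  rw [hkr] at hnull
  obtain ⟨M, hM0, hM⟩ := exists_smoothTransition_deriv_bound
  set K : ℝ := ∫ x : EuclideanSpace ℝ (Fin m),
    ‖fderiv ℝ (eta0 (E := EuclideanSpace ℝ (Fin m))) x‖ ^ 2 with hKdef
  have hK0 : 0 ≤ K := integral_nonneg fun x => by positivity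
  set δ : ℝ := ε / (4 * M ^ 2 * K + 1) with hδdef
  have hδ : 0 < δ := by positivity
  obtain ⟨y, s, hspos, hcov, hsumb⟩ := exists_ball_cover S hk1 hnull hδ
  obtain ⟨F, hF⟩ := hS.elim_finite_subcover (fun n => ball (y n) (2 * s n))
    (fun n => isOpen_ball) hcov
  set η : ℕ → EuclideanSpace ℝ (Fin m) → ℝ := fun n x => eta0 ((s n)⁻¹ • (x - y n)) with hηdef
  set l : List (EuclideanSpace ℝ (Fin m) → ℝ) := F.toList.map η with hldef
  have hmeml : ∀ f ∈ l, ∃ n ∈ F, f = η n := by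
    intro f hf
    rw [hldef, List.mem_map] at hf
    obtain ⟨n, hn, rfl⟩ := hf
    exact ⟨n, Finset.mem_toList.1 hn, rfl⟩
  have hlcd : ∀ f ∈ l, ContDiff ℝ 1 f := by
    intro f hf
    obtain ⟨n, _, rfl⟩ := hmeml f hf
    exact scaled_contDiff (y n) (hspos n)
  set c : ℝ := 1 / ((l.length : ℝ) + 1) with hcdef
  have hcpos : 0 < c := by positivity
  set W : EuclideanSpace ℝ (Fin m) → ℝ := foldh c l with hWdef
  have hWcd : ContDiff ℝ 1 W := foldh_contDiff hcpos hlcd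
  set ζ : EuclideanSpace ℝ (Fin m) → ℝ :=
    fun x => Real.smoothTransition (2 * W x - 1) with hζdef
  have hζcd : ContDiff ℝ 1 ζ :=
    Real.smoothTransition.contDiff.comp ((contDiff_const.mul hWcd).sub contDiff_const)
  -- compact support
  have hζhcs : HasCompactSupport ζ := by
    apply HasCompactSupport.intro
      (F.finite_toSet.isCompact_biUnion fun n _ => isCompact_closedBall (y n) (4 * s n))
    intro x hx
    have hzero : ∀ f ∈ l, f x = 0 := by
      intro f hf
      obtain ⟨n, hnF, rfl⟩ := hmeml f hf
      have hmem : x ∉ closedBall (y n) (4 * s n) := fun hmem => hx (Set.mem_biUnion hnF hmem)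
      have hd : 4 * s n ≤ dist x (y n) := le_of_lt (by simpa [mem_closedBall] using hmem)
      exact scaled_eq_zero _ (hspos n) hd
    have hWle : W x ≤ l.length * (c / 2) := foldh_le hcpos.le hzero
    have h12 : W x ≤ 1 / 2 := by
      have hL1 : (0:ℝ) < (l.length : ℝ) + 1 := by positivity
      have he : (l.length : ℝ) * (c / 2) = (l.length : ℝ) / (((l.length : ℝ) + 1) * 2) := by
        rw [hcdef]; field_simp
      have hle : (l.length : ℝ) / (((l.length : ℝ) + 1) * 2) ≤ 1 / 2 := by
        rw [div_le_div_iff₀ (by positivity) (by norm_num)]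
        have : (0:ℝ) ≤ (l.length : ℝ) := Nat.cast_nonneg _
        linarith
      calc W x ≤ (l.length : ℝ) * (c / 2) := hWle
        _ = (l.length : ℝ) / (((l.length : ℝ) + 1) * 2) := he
        _ ≤ 1 / 2 := hle
    show Real.smoothTransition (2 * W x - 1) = 0
    apply Real.smoothTransition.zero_of_nonpos
    linarith
  refine ⟨ζ, hζcd, hζhcs, fun x =>
    ⟨Real.smoothTransition.nonneg _, Real.smoothTransition.le_one _⟩, ?_, ?_⟩
  · -- the open neighborhood
    refine ⟨⋃ n ∈ F, ball (y n) (2 * s n), isOpen_biUnion fun n _ => isOpen_ball, hF, ?_⟩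
    intro x hx
    rw [Set.mem_iUnion₂] at hx
    obtain ⟨n, hnF, hxball⟩ := hx
    have h1 : η n x = 1 := scaled_eq_one _ (hspos n) (le_of_lt (by simpa [mem_ball] using hxball))
    have h2 : η n ∈ l := by
      rw [hldef, List.mem_map]
      exact ⟨n, Finset.mem_toList.2 hnF, rfl⟩
    have h3 : (1:ℝ) ≤ W x := by rw [← h1]; exact le_foldh c h2 x
    show Real.smoothTransition (2 * W x - 1) = 1
    apply Real.smoothTransition.one_of_one_le
    linarith
  · -- the integral bound
    have hst : Differentiable ℝ Real.smoothTransition :=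
      (Real.smoothTransition.contDiff (n := 1)).differentiable one_ne_zero
    have hpt : ∀ x, ‖fderiv ℝ ζ x‖ ^ 2
        ≤ 4 * M ^ 2 * ∑ n ∈ F, ‖fderiv ℝ (η n) x‖ ^ 2 := by
      intro x
      obtain ⟨L, hL, hLle⟩ := foldh_deriv hcpos hlcd x
      have hinner : HasFDerivAt (fun x => 2 * W x - 1) ((2:ℝ) • L) x :=
        (hL.const_mul 2).sub_const 1
      have houter : HasDerivAt Real.smoothTransition
          (deriv Real.smoothTransition (2 * W x - 1)) (2 * W x - 1) :=
        (hst _).hasDerivAt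
      have hcomp := houter.comp_hasFDerivAt x hinner
      have hfd : fderiv ℝ ζ x
          = deriv Real.smoothTransition (2 * W x - 1) • ((2:ℝ) • L) := hcomp.fderiv
      have hsum_eq : (l.map fun f => ‖fderiv ℝ f x‖ ^ 2).sum
          = ∑ n ∈ F, ‖fderiv ℝ (η n) x‖ ^ 2 := by
        rw [hldef, List.map_map]
        exact Finset.sum_map_toList F fun n => ‖fderiv ℝ (η n) x‖ ^ 2
      have h4 : ‖L‖ ^ 2 ≤ ∑ n ∈ F, ‖fderiv ℝ (η n) x‖ ^ 2 := hsum_eq ▸ hLle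
      have hn1 := norm_smul (α := ℝ) (β := EuclideanSpace ℝ (Fin m) →L[ℝ] ℝ)
        (deriv Real.smoothTransition (2 * W x - 1)) ((2:ℝ) • L)
      have hn2 := norm_smul (α := ℝ) (β := EuclideanSpace ℝ (Fin m) →L[ℝ] ℝ) (2:ℝ) L
      rw [hfd, hn1, hn2]
      have ha : |deriv Real.smoothTransition (2 * W x - 1)| ≤ M := hM _
      have ha2 : (deriv Real.smoothTransition (2 * W x - 1)) ^ 2 ≤ M ^ 2 := by
        rw [← sq_abs]
        exact pow_le_pow_left₀ (abs_nonneg _) ha 2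
      have hLnn : (0:ℝ) ≤ ‖L‖ := norm_nonneg L
      rw [Real.norm_eq_abs, Real.norm_eq_abs, abs_of_pos (by norm_num : (0:ℝ) < 2)]
      have habs2 : |deriv Real.smoothTransition (2 * W x - 1)| ^ 2
          = (deriv Real.smoothTransition (2 * W x - 1)) ^ 2 := sq_abs _
      nlinarith [sq_nonneg ‖L‖, abs_nonneg (deriv Real.smoothTransition (2 * W x - 1)),
        mul_le_mul ha2 h4 (sq_nonneg ‖L‖) (sq_nonneg M)]
    have hηint : ∀ n ∈ F, Integrable fun x : EuclideanSpace ℝ (Fin m) =>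
        ‖fderiv ℝ (η n) x‖ ^ 2 := fun n _ =>
      integrable_fderiv_sq (scaled_contDiff _ (hspos n)) (scaled_hcs _ (hspos n))
    have hζint : Integrable fun x : EuclideanSpace ℝ (Fin m) => ‖fderiv ℝ ζ x‖ ^ 2 :=
      integrable_fderiv_sq hζcd hζhcs
    have hRHSint : Integrable fun x : EuclideanSpace ℝ (Fin m) =>
        4 * M ^ 2 * ∑ n ∈ F, ‖fderiv ℝ (η n) x‖ ^ 2 :=
      (integrable_finset_sum F hηint).const_mul _
    have hmono := integral_mono hζint hRHSint hpt
    have hswap : (∫ x : EuclideanSpace ℝ (Fin m),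
          4 * M ^ 2 * ∑ n ∈ F, ‖fderiv ℝ (η n) x‖ ^ 2)
        = 4 * M ^ 2 * ∑ n ∈ F, ∫ x : EuclideanSpace ℝ (Fin m), ‖fderiv ℝ (η n) x‖ ^ 2 := by
      rw [integral_const_mul, integral_finset_sum F hηint]
    have hint_eq : ∀ n ∈ F, (∫ x : EuclideanSpace ℝ (Fin m), ‖fderiv ℝ (η n) x‖ ^ 2)
        = s n ^ k * K := by
      intro n _
      have := scaled_integral hm (y n) (hspos n)
      rw [hηdef]
      exact this
    have hsum_le : (∑ n ∈ F, ∫ x : EuclideanSpace ℝ (Fin m), ‖fderiv ℝ (η n) x‖ ^ 2) ≤ δ * K := by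
      calc (∑ n ∈ F, ∫ x : EuclideanSpace ℝ (Fin m), ‖fderiv ℝ (η n) x‖ ^ 2)
          = ∑ n ∈ F, s n ^ k * K := Finset.sum_congr rfl hint_eq
        _ = (∑ n ∈ F, s n ^ k) * K := by rw [Finset.sum_mul]
        _ ≤ δ * K := mul_le_mul_of_nonneg_right (hsumb F) hK0
    have hfinal : (∫ x, ‖fderiv ℝ ζ x‖ ^ 2) ≤ 4 * M ^ 2 * (δ * K) := by
      calc (∫ x, ‖fderiv ℝ ζ x‖ ^ 2)
          ≤ ∫ x : EuclideanSpace ℝ (Fin m),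
              4 * M ^ 2 * ∑ n ∈ F, ‖fderiv ℝ (η n) x‖ ^ 2 := hmono
        _ = 4 * M ^ 2 * ∑ n ∈ F, ∫ x : EuclideanSpace ℝ (Fin m),
              ‖fderiv ℝ (η n) x‖ ^ 2 := hswap
        _ ≤ 4 * M ^ 2 * (δ * K) := mul_le_mul_of_nonneg_left hsum_le (by positivity)
    have hA : (0:ℝ) < 4 * M ^ 2 * K + 1 := by positivity
    have hlast : 4 * M ^ 2 * (δ * K) < ε := by
      have he : 4 * M ^ 2 * (δ * K) = ε * ((4 * M ^ 2 * K) / (4 * M ^ 2 * K + 1)) := by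
        rw [hδdef]; ring
      rw [he]
      have hlt1 : (4 * M ^ 2 * K) / (4 * M ^ 2 * K + 1) < 1 :=
        (div_lt_one hA).2 (by linarith)
      calc ε * ((4 * M ^ 2 * K) / (4 * M ^ 2 * K + 1)) < ε * 1 :=
            mul_lt_mul_of_pos_left hlt1 hε
        _ = ε := mul_one ε
    linarith
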